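/- Let T be a perfect Roman domination stable tree and let u ∈ W(T). If T' is the tree obtained from T by adding two new vertices v_1, v_2, the edge v_2v_1, and the edge uv_2, then γ_R^p(T') = γ_R^p(T) + 2. -/

import Mathlib

open SimpleGraph

/-- A perfect Roman dominating function: values in {0,1,2}, and every vertex with
value 0 has exactly one neighbor with value 2. -/
def IsPRDF {V : Type*} (G : SimpleGraph V) (f : V → ℕ) : Prop :=
  (∀ v, f v ≤ 2) ∧ ∀ u, f u = 0 → ∃! v, G.Adj u v ∧ f v = 2

/-- The perfect Roman domination number: minimum weight of a PRDF. -/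
noncomputable def prdn {V : Type*} [Fintype V] (G : SimpleGraph V) : ℕ :=
  sInf {w | ∃ f : V → ℕ, IsPRDF G f ∧ ∑ v, f v = w}

/-- A graph is perfect Roman domination stable if removing any vertex
leaves the perfect Roman domination number unchanged. -/
noncomputable def Stable {V : Type*} [Fintype V] [DecidableEq V] (G : SimpleGraph V) : Prop :=
  ∀ v : V, prdn (G.induce {u | u ≠ v}) = prdn G

/-- The set of vertices receiving 0 under every minimum-weight PRDF. -/
def Wset {V : Type*} [Fintype V] (G : SimpleGraph V) : Set V :=
  {u | ∀ f : V → ℕ, IsPRDF G f → (∑ v, f v) = prdn G → f u = 0}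

/-- Degree of a vertex. -/
noncomputable def deg {V : Type*} (G : SimpleGraph V) (v : V) : ℕ := (G.neighborSet v).ncard

/-- The minimum weight is attained. -/
lemma prdn_exists {V : Type*} [Fintype V] (G : SimpleGraph V) :
    ∃ f : V → ℕ, IsPRDF G f ∧ ∑ v, f v = prdn G := by
  have hne : {w | ∃ f : V → ℕ, IsPRDF G f ∧ ∑ v, f v = w}.Nonempty :=
    ⟨∑ v : V, (1 : ℕ), fun _ => 1, ⟨fun _ => one_le_two, fun u h => absurd h one_ne_zero⟩, rfl⟩
  exact Nat.sInf_mem hne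

lemma prdn_le_of {V : Type*} [Fintype V] (G : SimpleGraph V) {f : V → ℕ} (hf : IsPRDF G f) :
    prdn G ≤ ∑ v, f v := Nat.sInf_le ⟨f, hf, rfl⟩

/-- attaching a pendant path `u - v₂ - v₁` (v₁ = inr 0, v₂ = inr 1)
at a vertex of `W(T)` of a stable tree increases the perfect Roman domination
number by exactly 2. -/
theorem stmt5 {V : Type*} [Fintype V] [DecidableEq V] (T : SimpleGraph V)
    (hT : T.IsTree) (hstab : Stable T) (u : V) (hu : u ∈ Wset T)
    (T' : SimpleGraph (V ⊕ Fin 2))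
    (hadj : ∀ a b : V ⊕ Fin 2, T'.Adj a b ↔
      ((∃ x y : V, a = Sum.inl x ∧ b = Sum.inl y ∧ T.Adj x y) ∨
       (a = Sum.inl u ∧ b = Sum.inr 1) ∨ (a = Sum.inr 1 ∧ b = Sum.inl u) ∨
       (a = Sum.inr 1 ∧ b = Sum.inr 0) ∨ (a = Sum.inr 0 ∧ b = Sum.inr 1))) :
    prdn T' = prdn T + 2 := by
  -- key transfer lemma: under mild side conditions the unique 2-neighbor of a
  -- 0-vertex `inl x` must be of the form `inl z`.
  have key : ∀ g : V ⊕ Fin 2 → ℕ, IsPRDF T' g → ∀ x : V, g (Sum.inl x) = 0 →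
      (g (Sum.inr 1) ≠ 2 ∨ x ≠ u) → ∃! z : V, T.Adj x z ∧ g (Sum.inl z) = 2 := by
    intro g hg x hx hside
    obtain ⟨v, ⟨hv1, hv2⟩, hvu⟩ := hg.2 (Sum.inl x) hx
    rcases (hadj _ _).mp hv1 with ⟨p, q, hp, hq, hpq⟩ | ⟨h1, h2⟩ | ⟨h1, _⟩ | ⟨h1, _⟩ | ⟨h1, _⟩
    · obtain rfl : x = p := Sum.inl.inj hp
      subst hq
      refine ⟨q, ⟨hpq, hv2⟩, ?_⟩
      rintro z ⟨hz1, hz2⟩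
      have hadj' : T'.Adj (Sum.inl x) (Sum.inl z) :=
        (hadj _ _).mpr (Or.inl ⟨x, z, rfl, rfl, hz1⟩)
      exact Sum.inl.inj (hvu _ ⟨hadj', hz2⟩)
    · obtain rfl : x = u := Sum.inl.inj h1
      subst h2
      rcases hside with h | h
      · exact absurd hv2 h
      · exact absurd rfl h
    · simp at h1
    · simp at h1
    · simp at h1
  -- if v₁ gets 0 then v₂ gets 2
  have hv1lem : ∀ g : V ⊕ Fin 2 → ℕ, IsPRDF T' g → g (Sum.inr 0) = 0 →
      g (Sum.inr 1) = 2 := by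
    intro g hg h0
    obtain ⟨v, ⟨hv1, hv2⟩, _⟩ := hg.2 (Sum.inr 0) h0
    rcases (hadj _ _).mp hv1 with ⟨p, q, hp, _, _⟩ | ⟨h1, _⟩ | ⟨h1, _⟩ | ⟨h1, _⟩ | ⟨_, h2⟩
    · simp at hp
    · simp at h1
    · exact absurd (Sum.inr.inj h1) (by decide)
    · exact absurd (Sum.inr.inj h1) (by decide)
    · subst h2; exact hv2
  -- if v₂ gets 0 then u or v₁ gets 2
  have hv2lem : ∀ g : V ⊕ Fin 2 → ℕ, IsPRDF T' g → g (Sum.inr 1) = 0 →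
      g (Sum.inl u) = 2 ∨ g (Sum.inr 0) = 2 := by
    intro g hg h0
    obtain ⟨v, ⟨hv1, hv2⟩, _⟩ := hg.2 (Sum.inr 1) h0
    rcases (hadj _ _).mp hv1 with ⟨p, q, hp, _, _⟩ | ⟨h1, _⟩ | ⟨_, h2⟩ | ⟨_, h2⟩ | ⟨h1, _⟩
    · simp at hp
    · simp at h1
    · subst h2; exact Or.inl hv2
    · subst h2; exact Or.inr hv2
    · exact absurd (Sum.inr.inj h1) (by decide)
  -- Upper bound
  obtain ⟨f, hf, hfw⟩ := prdn_exists T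
  have hgPRDF : IsPRDF T' (Sum.elim f fun _ => 1) := by
    constructor
    · rintro (x | i)
      · exact hf.1 x
      · exact one_le_two
    · rintro (x | i) hx
      · obtain ⟨z, ⟨hz1, hz2⟩, hzu⟩ := hf.2 x hx
        refine ⟨Sum.inl z, ⟨(hadj _ _).mpr (Or.inl ⟨x, z, rfl, rfl, hz1⟩), hz2⟩, ?_⟩
        rintro (y | i) ⟨hy1, hy2⟩
        · rcases (hadj _ _).mp hy1 with ⟨p, q, hp, hq, hpq⟩ | ⟨_, h2⟩ | ⟨h1, _⟩ | ⟨h1, _⟩ | ⟨h1, _⟩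
          · obtain rfl : x = p := Sum.inl.inj hp
            obtain rfl : y = q := Sum.inl.inj hq
            exact congrArg Sum.inl (hzu y ⟨hpq, hy2⟩)
          · simp at h2
          · simp at h1
          · simp at h1
          · simp at h1
        · simp at hy2
      · simp at hx
  have hup : prdn T' ≤ prdn T + 2 := by
    have h1 := prdn_le_of T' hgPRDF
    have h2 : ∑ v : V ⊕ Fin 2, Sum.elim f (fun _ => (1:ℕ)) v = prdn T + 2 := by
      rw [Fintype.sum_sum_type, Fin.sum_univ_two]
      simp only [Sum.elim_inl, Sum.elim_inr]
      rw [hfw]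
    omega
  -- Lower bound
  obtain ⟨g2, hg2, hg2w⟩ := prdn_exists T'
  have hlow : prdn T + 2 ≤ prdn T' := by
    rw [← hg2w, Fintype.sum_sum_type, Fin.sum_univ_two]
    by_cases hb : g2 (Sum.inr 1) = 2
    · by_cases hu0 : g2 (Sum.inl u) = 0
      · -- raise the value at u from 0 to 1
        set h' : V → ℕ := Function.update (fun x => g2 (Sum.inl x)) u 1 with hh'
        have hPRDF : IsPRDF T h' := by
          constructor
          · intro x
            by_cases hx : x = u
            · subst hx; simp [hh']
            · simp only [hh', Function.update_of_ne hx]; exact hg2.1 _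
          · intro x hx
            have hxu : x ≠ u := by
              intro hc; subst hc; simp [hh'] at hx
            rw [hh', Function.update_of_ne hxu] at hx
            obtain ⟨z, ⟨hz1, hz2⟩, hzu⟩ := key g2 hg2 x hx (Or.inr hxu)
            have hz_ne : z ≠ u := by
              intro hc; subst hc; rw [hu0] at hz2; exact absurd hz2 (by decide)
            refine ⟨z, ⟨hz1, by rw [hh', Function.update_of_ne hz_ne]; exact hz2⟩, ?_⟩
            rintro y ⟨hy1, hy2⟩
            have hy_ne : y ≠ u := by
              intro hc; subst hc; simp [hh'] at hy2
            rw [hh', Function.update_of_ne hy_ne] at hy2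
            exact hzu y ⟨hy1, hy2⟩
        have hsum' : ∑ x, h' x = ∑ x, g2 (Sum.inl x) + 1 := by
          have heach : ∀ x, h' x = g2 (Sum.inl x) + (if x = u then 1 else 0) := by
            intro x
            by_cases hx : x = u
            · subst hx; simp [hh', hu0]
            · simp [hh', Function.update_of_ne hx, hx]
          rw [Finset.sum_congr rfl (fun x _ => heach x), Finset.sum_add_distrib]
          simp
        have hle := prdn_le_of T hPRDF
        have hne : ∑ x, h' x ≠ prdn T := by
          intro hc
          have := hu h' hPRDF hc
          simp [hh'] at this
        omega
      · have hPRDF : IsPRDF T (fun x => g2 (Sum.inl x)) :=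
          ⟨fun x => hg2.1 _, fun x hx => key g2 hg2 x hx (Or.inr (fun hc => hu0 (hc ▸ hx)))⟩
        have hle := prdn_le_of T hPRDF
        omega
    · have hPRDF : IsPRDF T (fun x => g2 (Sum.inl x)) :=
        ⟨fun x => hg2.1 _, fun x hx => key g2 hg2 x hx (Or.inl hb)⟩
      have hle := prdn_le_of T hPRDF
      have hb' : g2 (Sum.inr 1) ≤ 2 := hg2.1 _
      have ha : g2 (Sum.inr 0) ≠ 0 := fun hc => hb (hv1lem g2 hg2 hc)
      by_cases hb1 : g2 (Sum.inr 1) = 1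
      · omega
      · have hb0 : g2 (Sum.inr 1) = 0 := by omega
        rcases hv2lem g2 hg2 hb0 with h2u | h20
        · have hne : ∑ x, g2 (Sum.inl x) ≠ prdn T := by
            intro hc
            have := hu _ hPRDF hc
            rw [this] at h2u
            exact absurd h2u (by decide)
          omega
        · omega
  omega
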